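/- Let x, y, s, t be integers such that x^2 + s^2 - s^4 = 1 - t^2 and y^2 + t^2 - t^4 = s^2 - 1. Then (x,y,s,t) = (0, 0, ±1, ±1) or (±1, 0, ±1, 0). -/
import Mathlib

private lemma sq1 (a : ℤ) (h : a^2 = 1) : a = 1 ∨ a = -1 := by
  have h' : (a - 1) * (a + 1) = 0 := by linear_combination h
  rcases mul_eq_zero.mp h' with h'' | h'' <;> [left; right] <;> omega

private lemma gap (a b : ℤ) (h : b^2 < a^2) : |b| + 1 ≤ |a| := by
  have hlt : |b| < |a| := by
    by_contra h'
    push_neg at h'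
    have : a^2 ≤ b^2 := by nlinarith [sq_abs a, sq_abs b, abs_nonneg a]
    omega
  omega

private lemma aux (t y : ℤ) (h : y^2 = t^4 - 1) : (t = 1 ∨ t = -1) ∧ y = 0 := by
  have h' : (t^2 - y) * (t^2 + y) = 1 := by linear_combination -h
  rcases Int.eq_one_or_neg_one_of_mul_eq_one' h' with ⟨ha, hb⟩ | ⟨ha, hb⟩
  · have hy : y = 0 := by omega
    have ht : t^2 = 1 := by omega
    exact ⟨sq1 t ht, hy⟩
  · exfalso
    have : t^2 = -1 := by omega
    nlinarith [sq_nonneg t]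

theorem stmt_7 (x y s t : ℤ)
    (h1 : x^2 + s^2 - s^4 = 1 - t^2) (h2 : y^2 + t^2 - t^4 = s^2 - 1) :
    (x = 0 ∧ y = 0 ∧ (s = 1 ∨ s = -1) ∧ (t = 1 ∨ t = -1)) ∨
    ((x = 1 ∨ x = -1) ∧ y = 0 ∧ (s = 1 ∨ s = -1) ∧ t = 0) := by
  rcases lt_trichotomy (s^2) (t^2) with hc | hc | hc
  · -- s² < t² : contradictions
    exfalso
    rcases lt_trichotomy (s^2 + t^2) 2 with hd | hd | hd
    · have ht : t^2 = 1 := by nlinarith [sq_nonneg s, sq_nonneg t]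
      have hs : s^2 = 0 := by nlinarith [sq_nonneg s]
      nlinarith [sq_nonneg y]
    · have ht : t^2 = 2 := by nlinarith [sq_nonneg s]
      have hb1 : -1 ≤ t := by nlinarith [sq_nonneg (t+1)]
      have hb2 : t ≤ 1 := by nlinarith [sq_nonneg (t-1)]
      interval_cases t <;> omega
    · have hy : (t^2 - 1)^2 < y^2 := by nlinarith
      have hg := gap y (t^2 - 1) hy
      have h3 : (|t^2-1| + 1)^2 ≤ |y|^2 := by
        have h0 : (0:ℤ) ≤ |t^2-1| + 1 := by positivity
        exact pow_le_pow_left₀ h0 hg 2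
      nlinarith [sq_abs y, sq_abs (t^2-1), le_abs_self (t^2-1), abs_nonneg (t^2-1)]
  · -- s² = t²
    have hy : y^2 = t^4 - 1 := by linarith
    obtain ⟨ht, hy0⟩ := aux t y hy
    have ht2 : t^2 = 1 := by rcases ht with h | h <;> simp [h]
    have hs2 : s^2 = 1 := by omega
    have hs4 : s^4 = 1 := by rw [show s^4 = (s^2)^2 by ring, hs2]; norm_num
    have hx : x^2 = 0 := by linarith
    have hx0 : x = 0 := pow_eq_zero_iff (n := 2) (by norm_num) |>.mp hx
    exact Or.inl ⟨hx0, hy0, sq1 s hs2, ht⟩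
  · -- t² < s²
    have hx : (s^2 - 1)^2 < x^2 := by nlinarith
    have hg := gap x (s^2 - 1) hx
    have h3 : (|s^2-1| + 1)^2 ≤ |x|^2 := by
      have h0 : (0:ℤ) ≤ |s^2-1| + 1 := by positivity
      exact pow_le_pow_left₀ h0 hg 2
    have key : s^2 + t^2 ≤ 1 := by
      nlinarith [sq_abs x, sq_abs (s^2-1), le_abs_self (s^2-1), abs_nonneg (s^2-1)]
    have hs2 : s^2 = 1 := by
      have h5 : s^2 <= 1 := by linarith [sq_nonneg t]
      have h6 : 1 <= s^2 := by linarith [sq_nonneg t]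
      omega
    have ht2 : t^2 = 0 := by have := sq_nonneg t; omega
    have ht0 : t = 0 := pow_eq_zero_iff (n := 2) (by norm_num) |>.mp ht2
    have hs4 : s^4 = 1 := by rw [show s^4 = (s^2)^2 by ring, hs2]; norm_num
    have hx2 : x^2 = 1 := by subst ht0; linarith
    have hy2 : y^2 = 0 := by subst ht0; linarith
    have hy0 : y = 0 := pow_eq_zero_iff (n := 2) (by norm_num) |>.mp hy2
    exact Or.inr ⟨sq1 x hx2, hy0, sq1 s hs2, ht0⟩
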